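/- arXiv:2403.05813 — 4 statements merged into one kernel-verified Lean document; each statement's English description precedes it below -/
import Mathlib

section
/- Let α > 0, δ ∈ (0, α), {U_n} i.i.d. Uniform(0,1). Define W*_0 = 1 - U_0^(1/α) and W*_n = min{1 - (1 - W*_{n-1})^(α/(α-δ)), 1 - U_n^(1/δ)} for n ≥ 1. Then for every n, P(W*_n ≤ w) = 1 - (1-w)^α for 0 < w < 1; in particular the process is stationary with CPFD(α) marginals. -/
open MeasureTheory ProbabilityTheory Real Set

/-- Auxiliary recursive function expressing `W n` as a function of `U 0, …, U n`. -/
noncomputable def amG (α δ : ℝ) : ℕ → (ℕ → ℝ) → ℝ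
  | 0 => fun u => 1 - u 0 ^ (1 / α)
  | (n + 1) => fun u =>
      min (1 - (1 - amG α δ n u) ^ (α / (α - δ))) (1 - u (n + 1) ^ (1 / δ))

lemma amG_measurable (α δ : ℝ) (hα : 0 < α) (hδ : δ ∈ Set.Ioo 0 α) :
    ∀ n, Measurable (amG α δ n) := by
  have h1 : (0:ℝ) ≤ 1 / α := by positivity
  have h2 : (0:ℝ) ≤ α / (α - δ) := by
    apply div_nonneg hα.le; linarith [hδ.2]
  have h3 : (0:ℝ) ≤ 1 / δ := by have := hδ.1; positivity
  intro n
  induction n with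
  | zero =>
      exact (measurable_const.sub
        (((continuous_rpow_const h1).measurable).comp (measurable_pi_apply 0)))
  | succ n ih =>
      exact ((measurable_const.sub
          (((continuous_rpow_const h2).measurable).comp (measurable_const.sub ih))).min
        (measurable_const.sub
          (((continuous_rpow_const h3).measurable).comp (measurable_pi_apply (n + 1)))))

lemma amG_congr (α δ : ℝ) : ∀ n, ∀ u v : ℕ → ℝ, (∀ i ≤ n, u i = v i) →
    amG α δ n u = amG α δ n v := by
  intro n
  induction n with
  | zero => intro u v h; simp [amG, h 0 le_rfl]
  | succ n ih =>
      intro u v h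
      simp only [amG]
      rw [ih u v fun i hi => h i (hi.trans (Nat.le_succ n)), h (n + 1) le_rfl]

theorem stmt_11 {Ω : Type*} [MeasureSpace Ω] [IsProbabilityMeasure (ℙ : Measure Ω)]
    (U : ℕ → Ω → ℝ) (hUm : ∀ n, Measurable (U n))
    (hUunif : ∀ n, pdf.IsUniform (U n) (Set.Ioo (0:ℝ) 1) ℙ)
    (hind : iIndepFun U ℙ)
    (α δ : ℝ) (hα : 0 < α) (hδ : δ ∈ Set.Ioo 0 α)
    (W : ℕ → Ω → ℝ)
    (hW0 : W 0 = fun ω => 1 - U 0 ω ^ (1 / α))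
    (hWn : ∀ n, W (n + 1) = fun ω =>
      min (1 - (1 - W n ω) ^ (α / (α - δ))) (1 - U (n + 1) ω ^ (1 / δ))) :
    ∀ n, ∀ w ∈ Set.Ioo (0:ℝ) 1,
      ℙ {ω | W n ω ≤ w} = ENNReal.ofReal (1 - (1 - w) ^ α) := by
  have hαδ : 0 < α - δ := by linarith [hδ.2]
  have hδ0 : 0 < δ := hδ.1
  have hvol : (volume (Set.Ioo (0:ℝ) 1)) = 1 := by simp
  have hvol0 : (volume (Set.Ioo (0:ℝ) 1)) ≠ 0 := by rw [hvol]; simp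
  have hvolt : (volume (Set.Ioo (0:ℝ) 1)) ≠ ⊤ := by rw [hvol]; simp
  -- the uniform variables lie in (0,1) almost surely
  have hgood : ∀ᵐ ω ∂(ℙ : Measure Ω), ∀ k, U k ω ∈ Set.Ioo (0:ℝ) 1 := by
    rw [MeasureTheory.ae_all_iff]
    intro k
    have : (ℙ : Measure Ω) (U k ⁻¹' (Set.Ioo (0:ℝ) 1)ᶜ) = 0 := by
      rw [(hUunif k).measure_preimage hvol0 hvolt measurableSet_Ioo.compl]
      simp
    exact this
  -- W n = amG α δ n ∘ (U · ω)
  have hWeq : ∀ n, W n = fun ω => amG α δ n (fun i => U i ω) := by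
    intro n
    induction n with
    | zero => rw [hW0]; rfl
    | succ n ih => rw [hWn n, ih]; rfl
  -- measurability of W n
  have hWm : ∀ n, Measurable (W n) := by
    intro n
    rw [hWeq n]
    exact (amG_measurable α δ hα hδ n).comp (measurable_pi_lambda _ hUm)
  -- W n ∈ (0,1) a.s.
  have hWgood : ∀ᵐ ω ∂(ℙ : Measure Ω), ∀ n, W n ω ∈ Set.Ioo (0:ℝ) 1 := by
    filter_upwards [hgood] with ω hω
    intro n
    induction n with
    | zero =>
        rw [hW0]
        have h1 : 0 < U 0 ω ^ (1 / α) := Real.rpow_pos_of_pos (hω 0).1 _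
        have h2 : U 0 ω ^ (1 / α) < 1 :=
          Real.rpow_lt_one (hω 0).1.le (hω 0).2 (by positivity)
        rw [Set.mem_Ioo]
        exact ⟨by linarith, by linarith⟩
    | succ n ih =>
        rw [hWn n]
        have hc : (0:ℝ) < α / (α - δ) := by positivity
        have h1 : 0 < (1 - W n ω) ^ (α / (α - δ)) :=
          Real.rpow_pos_of_pos (by linarith [ih.2]) _
        have h2 : (1 - W n ω) ^ (α / (α - δ)) < 1 :=
          Real.rpow_lt_one (by linarith [ih.2]) (by linarith [ih.1]) hc
        have h3 : 0 < U (n + 1) ω ^ (1 / δ) := Real.rpow_pos_of_pos (hω (n + 1)).1 _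
        have h4 : U (n + 1) ω ^ (1 / δ) < 1 :=
          Real.rpow_lt_one (hω (n + 1)).1.le (hω (n + 1)).2 (by positivity)
        constructor
        · rw [lt_min_iff]; constructor <;> linarith
        · calc min (1 - (1 - W n ω) ^ (α / (α - δ))) (1 - U (n + 1) ω ^ (1 / δ))
              ≤ 1 - (1 - W n ω) ^ (α / (α - δ)) := min_le_left _ _
            _ < 1 := by linarith
  -- independence of W n and U (n+1)
  have hIndep : ∀ n, IndepFun (W n) (U (n + 1)) ℙ := by
    intro n
    set S : Finset ℕ := Finset.range (n + 1) with hS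
    set T : Finset ℕ := {n + 1} with hT
    have hdisj : Disjoint S T := by
      simp [hS, hT, Finset.disjoint_singleton_right]
    have base := hind.indepFun_finset S T hdisj hUm
    set φ : ({i // i ∈ S} → ℝ) → ℝ := fun x =>
      amG α δ n (fun i => if h : i ∈ S then x ⟨i, h⟩ else 0) with hφdef
    set ψ : ({i // i ∈ T} → ℝ) → ℝ := fun x => x ⟨n + 1, by simp [hT]⟩ with hψdef
    have hφm : Measurable φ := by
      apply (amG_measurable α δ hα hδ n).comp
      apply measurable_pi_lambda
      intro i
      by_cases h : i ∈ S
      · simpa [h] using measurable_pi_apply (⟨i, h⟩ : {i // i ∈ S})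
      · simpa [h] using (measurable_const : Measurable fun _ : {i // i ∈ S} → ℝ => (0:ℝ))
    have hψm : Measurable ψ := measurable_pi_apply _
    have key := base.comp hφm hψm
    have h1 : (φ ∘ fun ω (i : {i // i ∈ S}) => U i ω) = W n := by
      funext ω
      rw [hWeq n]
      simp only [Function.comp_apply, hφdef]
      apply amG_congr
      intro i hi
      have : i ∈ S := Finset.mem_range.mpr (Nat.lt_succ_of_le hi)
      simp [this]
    have h2 : (ψ ∘ fun ω (i : {i // i ∈ T}) => U i ω) = U (n + 1) := rfl
    rwa [h1, h2] at key
  -- uniform probability computation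
  have hUcalc : ∀ k (A : Set ℝ), MeasurableSet A →
      (ℙ : Measure Ω) (U k ⁻¹' A) = volume (Set.Ioo (0:ℝ) 1 ∩ A) := by
    intro k A hA
    rw [(hUunif k).measure_preimage hvol0 hvolt hA, hvol]
    simp
  -- main induction
  intro n
  induction n with
  | zero =>
      intro w hw
      have htw : (0:ℝ) < 1 - w := by linarith [hw.2]
      have htw1 : (1:ℝ) - w < 1 := by linarith [hw.1]
      have hs0 : 0 < (1 - w) ^ α := Real.rpow_pos_of_pos htw α
      have hs1 : (1 - w) ^ α < 1 := Real.rpow_lt_one htw.le htw1 hα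
      have hae : {ω | W 0 ω ≤ w} =ᵐ[(ℙ : Measure Ω)] U 0 ⁻¹' Set.Ici ((1 - w) ^ α) := by
        apply Filter.eventuallyEq_set.2
        filter_upwards [hgood] with ω hω
        rw [hW0]
        simp only [Set.mem_setOf_eq, Set.mem_preimage, Set.mem_Ici]
        constructor
        · intro h
          have h1 : 1 - w ≤ U 0 ω ^ (1 / α) := by linarith
          calc (1 - w) ^ α ≤ (U 0 ω ^ (1 / α)) ^ α :=
                Real.rpow_le_rpow htw.le h1 hα.le
            _ = U 0 ω := by
                rw [← Real.rpow_mul (hω 0).1.le, one_div, inv_mul_cancel₀ hα.ne', Real.rpow_one]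
        · intro h
          have h1 : ((1 - w) ^ α) ^ (1 / α) ≤ U 0 ω ^ (1 / α) :=
            Real.rpow_le_rpow hs0.le h (by positivity)
          rw [← Real.rpow_mul htw.le, mul_one_div, div_self hα.ne', Real.rpow_one] at h1
          linarith
      rw [measure_congr hae, hUcalc 0 _ measurableSet_Ici]
      have : Set.Ioo (0:ℝ) 1 ∩ Set.Ici ((1 - w) ^ α) = Set.Ico ((1 - w) ^ α) 1 := by
        ext x
        simp only [Set.mem_inter_iff, Set.mem_Ioo, Set.mem_Ici, Set.mem_Ico]
        constructor
        · rintro ⟨⟨_, h2⟩, h3⟩; exact ⟨h3, h2⟩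
        · rintro ⟨h1, h2⟩; exact ⟨⟨lt_of_lt_of_le hs0 h1, h2⟩, h1⟩
      rw [this, Real.volume_Ico]
  | succ n ih =>
      intro w hw
      set t : ℝ := 1 - w with ht
      have htw : (0:ℝ) < t := by simp [ht]; linarith [hw.2]
      have htw1 : t < 1 := by simp [ht]; linarith [hw.1]
      have hc : (0:ℝ) < α / (α - δ) := by positivity
      -- auxiliary quantities
      set t' : ℝ := t ^ ((α - δ) / α) with ht'
      have ht'0 : 0 < t' := Real.rpow_pos_of_pos htw _
      have ht'1 : t' < 1 := Real.rpow_lt_one htw.le htw1 (by positivity)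
      set w' : ℝ := 1 - t' with hw'
      have hw'mem : w' ∈ Set.Ioo (0:ℝ) 1 := ⟨by simp [hw']; linarith, by simp [hw']; linarith⟩
      have htd0 : 0 < t ^ δ := Real.rpow_pos_of_pos htw _
      have htd1 : t ^ δ < 1 := Real.rpow_lt_one htw.le htw1 hδ0
      -- key exponent identities
      have hexp1 : t' ^ (α / (α - δ)) = t := by
        rw [ht', ← Real.rpow_mul htw.le, div_mul_div_comm,
          mul_comm (α - δ) α, div_self (by positivity), Real.rpow_one]
      have hexp2 : (t ^ δ) ^ (1 / δ) = t := by
        rw [← Real.rpow_mul htw.le, mul_one_div, div_self hδ0.ne', Real.rpow_one]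
      have hexp3 : t' ^ α = t ^ (α - δ) := by
        rw [ht', ← Real.rpow_mul htw.le]
        congr 1
        field_simp
      -- the a.e. set identity
      set s1 : Set Ω := W n ⁻¹' Set.Ioi w' with hs1
      set s2 : Set Ω := U (n + 1) ⁻¹' Set.Iio (t ^ δ) with hs2
      have hae : {ω | W (n + 1) ω ≤ w} =ᵐ[(ℙ : Measure Ω)] ((s1 ∩ s2)ᶜ : Set Ω) := by
        apply Filter.eventuallyEq_set.2
        filter_upwards [hgood, hWgood] with ω hω hWω
        rw [hWn n]
        simp only [Set.mem_setOf_eq, Set.mem_compl_iff, Set.mem_inter_iff, hs1, hs2,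
          Set.mem_preimage, Set.mem_Ioi, Set.mem_Iio]
        have hWn01 := hWω n
        have hU01 := hω (n + 1)
        have e1 : w' < W n ω ↔ w < 1 - (1 - W n ω) ^ (α / (α - δ)) := by
          constructor
          · intro h
            have h2 : 1 - W n ω < t' := by simp only [hw'] at h; linarith
            have h3 : (1 - W n ω) ^ (α / (α - δ)) < t' ^ (α / (α - δ)) :=
              (Real.rpow_lt_rpow_iff (by linarith [hWn01.2]) ht'0.le hc).mpr h2
            rw [hexp1] at h3
            simp only [ht] at h3 ⊢; linarith
          · intro h
            have h3 : (1 - W n ω) ^ (α / (α - δ)) < t' ^ (α / (α - δ)) := by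
              rw [hexp1]; simp only [ht] at h ⊢; linarith
            have h2 := (Real.rpow_lt_rpow_iff (by linarith [hWn01.2]) ht'0.le hc).mp h3
            simp only [hw']; linarith
        have e2 : U (n + 1) ω < t ^ δ ↔ w < 1 - U (n + 1) ω ^ (1 / δ) := by
          constructor
          · intro h
            have h3 : U (n + 1) ω ^ (1 / δ) < (t ^ δ) ^ (1 / δ) :=
              (Real.rpow_lt_rpow_iff hU01.1.le htd0.le (by positivity)).mpr h
            rw [hexp2] at h3
            simp only [ht] at h3 ⊢; linarith
          · intro h
            have h3 : U (n + 1) ω ^ (1 / δ) < (t ^ δ) ^ (1 / δ) := by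
              rw [hexp2]; simp only [ht] at h ⊢; linarith
            exact (Real.rpow_lt_rpow_iff hU01.1.le htd0.le (by positivity)).mp h3
        constructor
        · rintro h ⟨h1, h2⟩
          exact absurd h (not_le.mpr (lt_min_iff.mpr ⟨e1.mp h1, e2.mp h2⟩))
        · intro h
          by_contra hcon
          push_neg at hcon
          rw [lt_min_iff] at hcon
          exact h ⟨e1.mpr hcon.1, e2.mpr hcon.2⟩
      -- measure computation
      have hms1 : MeasurableSet s1 := (hWm n) measurableSet_Ioi
      have hms2 : MeasurableSet s2 := (hUm (n + 1)) measurableSet_Iio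
      have hps1 : (ℙ : Measure Ω) s1 = ENNReal.ofReal (t ^ (α - δ)) := by
        have : s1 = (W n ⁻¹' Set.Iic w')ᶜ := by
          rw [hs1, ← Set.preimage_compl, Set.compl_Iic]
        rw [this, prob_compl_eq_one_sub ((hWm n) measurableSet_Iic)]
        have hWc : (ℙ : Measure Ω) (W n ⁻¹' Set.Iic w') =
            ENNReal.ofReal (1 - (1 - w') ^ α) := ih w' hw'mem
        rw [hWc]
        have h1w' : (1:ℝ) - w' = t' := by simp [hw']
        rw [h1w', hexp3]
        have ht1 : t ^ (α - δ) ≤ 1 := by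
          calc t ^ (α - δ) ≤ 1 ^ (α - δ) := Real.rpow_le_rpow htw.le htw1.le hαδ.le
            _ = 1 := Real.one_rpow _
        rw [← ENNReal.ofReal_one,
          ← ENNReal.ofReal_sub _ (by linarith : (0:ℝ) ≤ 1 - t ^ (α - δ))]
        congr 1
        ring
      have hps2 : (ℙ : Measure Ω) s2 = ENNReal.ofReal (t ^ δ) := by
        rw [hs2, hUcalc (n + 1) _ measurableSet_Iio]
        have : Set.Ioo (0:ℝ) 1 ∩ Set.Iio (t ^ δ) = Set.Ioo 0 (t ^ δ) := by
          ext x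
          simp only [Set.mem_inter_iff, Set.mem_Ioo, Set.mem_Iio]
          constructor
          · rintro ⟨⟨h1, _⟩, h3⟩; exact ⟨h1, h3⟩
          · rintro ⟨h1, h2⟩; exact ⟨⟨h1, h2.trans htd1⟩, h2⟩
        rw [this, Real.volume_Ioo, sub_zero]
      have hprod : (ℙ : Measure Ω) (s1 ∩ s2) = ENNReal.ofReal (t ^ α) := by
        rw [hs1, hs2, (hIndep n).measure_inter_preimage_eq_mul _ _ measurableSet_Ioi
          measurableSet_Iio, ← hs1, ← hs2, hps1, hps2, ← ENNReal.ofReal_mul (by positivity),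
          ← Real.rpow_add htw, sub_add_cancel]
      rw [measure_congr hae, prob_compl_eq_one_sub (hms1.inter hms2), hprod]
      have htα1 : t ^ α ≤ 1 := by
        calc t ^ α ≤ 1 ^ α := Real.rpow_le_rpow htw.le htw1.le hα.le
          _ = 1 := Real.one_rpow _
      rw [← ENNReal.ofReal_one, ← ENNReal.ofReal_sub _ (by positivity : (0:ℝ) ≤ t ^ α)]
end

section
/- Let α > 0, δ ∈ (0, α), W*_0 = 1 - U_0^(1/α) with U_0, U_1 i.i.d. Uniform(0,1), and W*_1 = min{1 - (1 - W*_0)^(α/(α-δ)), 1 - U_1^(1/δ)}. Then the joint CDF is P(W*_0 ≤ w_0, W*_1 ≤ w_1) = 1 - (1-w_0)^α - (1-w_1)^α + (1-w_1)^δ · min{(1-w_0)^α, (1-w_1)^(α-δ)} for 0 < w_0, w_1 < 1. -/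
open MeasureTheory ProbabilityTheory Real Set

theorem stmt_12 {Ω : Type*} [MeasureSpace Ω] [IsProbabilityMeasure (ℙ : Measure Ω)]
    (U₀ U₁ : Ω → ℝ) (hU₀m : Measurable U₀) (hU₁m : Measurable U₁)
    (hU₀ : pdf.IsUniform U₀ (Set.Ioo (0:ℝ) 1) ℙ)
    (hU₁ : pdf.IsUniform U₁ (Set.Ioo (0:ℝ) 1) ℙ)
    (hind : IndepFun U₀ U₁ ℙ)
    (α δ : ℝ) (hα : 0 < α) (hδ : δ ∈ Set.Ioo 0 α)
    (W₀ W₁ : Ω → ℝ)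
    (hW₀ : W₀ = fun ω => 1 - U₀ ω ^ (1 / α))
    (hW₁ : W₁ = fun ω =>
      min (1 - (1 - W₀ ω) ^ (α / (α - δ))) (1 - U₁ ω ^ (1 / δ))) :
    ∀ w₀ ∈ Set.Ioo (0:ℝ) 1, ∀ w₁ ∈ Set.Ioo (0:ℝ) 1,
      ℙ {ω | W₀ ω ≤ w₀ ∧ W₁ ω ≤ w₁}
        = ENNReal.ofReal (1 - (1 - w₀) ^ α - (1 - w₁) ^ α
            + (1 - w₁) ^ δ * min ((1 - w₀) ^ α) ((1 - w₁) ^ (α - δ))) := by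
  intro w₀ hw₀ w₁ hw₁
  obtain ⟨hδ0, hδα⟩ := hδ
  have hαδ : 0 < α - δ := by linarith
  have hw₀0 : (0:ℝ) < 1 - w₀ := by linarith [hw₀.2]
  have hw₀1 : 1 - w₀ < 1 := by linarith [hw₀.1]
  have hw₁0 : (0:ℝ) < 1 - w₁ := by linarith [hw₁.2]
  have hw₁1 : 1 - w₁ < 1 := by linarith [hw₁.1]
  set a : ℝ := (1 - w₀) ^ α with ha_def
  set b : ℝ := (1 - w₁) ^ δ with hb_def
  set c : ℝ := (1 - w₁) ^ (α - δ) with hc_def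
  set m : ℝ := max a c with hm_def
  have ha0 : 0 < a := rpow_pos_of_pos hw₀0 α
  have ha1 : a < 1 := rpow_lt_one hw₀0.le hw₀1 hα
  have hb0 : 0 < b := rpow_pos_of_pos hw₁0 δ
  have hb1 : b < 1 := rpow_lt_one hw₁0.le hw₁1 hδ0
  have hc0 : 0 < c := rpow_pos_of_pos hw₁0 (α - δ)
  have hc1 : c < 1 := rpow_lt_one hw₁0.le hw₁1 hαδ
  have hm0 : 0 < m := lt_max_of_lt_left ha0
  have hm1 : m < 1 := max_lt ha1 hc1
  have ham : a ≤ m := le_max_left _ _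
  -- volume facts
  have hvol : (volume (Set.Ioo (0:ℝ) 1)) = 1 := by simp
  have hpre₀ : ∀ A : Set ℝ, MeasurableSet A →
      ℙ (U₀ ⁻¹' A) = volume (Set.Ioo (0:ℝ) 1 ∩ A) := by
    intro A hA
    rw [hU₀.measure_preimage (by simp) (by simp) hA, hvol, div_one]
  have hpre₁ : ∀ A : Set ℝ, MeasurableSet A →
      ℙ (U₁ ⁻¹' A) = volume (Set.Ioo (0:ℝ) 1 ∩ A) := by
    intro A hA
    rw [hU₁.measure_preimage (by simp) (by simp) hA, hvol, div_one]
  -- the good set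
  set G : Set Ω := U₀ ⁻¹' (Set.Ioo (0:ℝ) 1) ∩ U₁ ⁻¹' (Set.Ioo (0:ℝ) 1) with hG_def
  have hGm : MeasurableSet G :=
    (hU₀m measurableSet_Ioo).inter (hU₁m measurableSet_Ioo)
  have hGc : ℙ Gᶜ = 0 := by
    have h0 : ℙ (U₀ ⁻¹' (Set.Ioo (0:ℝ) 1))ᶜ = 0 := by
      rw [measure_compl (hU₀m measurableSet_Ioo) (measure_ne_top _ _),
        hpre₀ _ measurableSet_Ioo]
      simp
    have h1 : ℙ (U₁ ⁻¹' (Set.Ioo (0:ℝ) 1))ᶜ = 0 := by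
      rw [measure_compl (hU₁m measurableSet_Ioo) (measure_ne_top _ _),
        hpre₁ _ measurableSet_Ioo]
      simp
    rw [hG_def, Set.compl_inter]
    exact le_antisymm (le_trans (measure_union_le _ _) (by rw [h0, h1]; simp)) zero_le
  have hmeasG : ∀ S : Set Ω, ℙ S = ℙ (S ∩ G) := by
    intro S
    rw [← measure_inter_add_diff S hGm]
    have h : ℙ (S \ G) = 0 :=
      le_antisymm (le_trans (measure_mono (Set.diff_subset_compl S G)) hGc.le) zero_le
    rw [h, add_zero]
  -- the event E
  set E : Set Ω := U₀ ⁻¹' (Set.Ici m) ∪ (U₀ ⁻¹' (Set.Ico a m) ∩ U₁ ⁻¹' (Set.Ici b))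
    with hE_def
  -- pointwise equivalence on G
  have hSG : {ω | W₀ ω ≤ w₀ ∧ W₁ ω ≤ w₁} ∩ G = E ∩ G := by
    ext ω
    simp only [Set.mem_inter_iff, Set.mem_setOf_eq, and_congr_left_iff]
    intro hG
    obtain ⟨hu₀, hu₁⟩ := hG
    simp only [Set.mem_preimage, Set.mem_Ioo] at hu₀ hu₁
    have h1 : W₀ ω ≤ w₀ ↔ a ≤ U₀ ω := by
      rw [hW₀]
      simp only [one_div]
      constructor
      · intro h
        exact (Real.le_rpow_inv_iff_of_pos hw₀0.le hu₀.1.le hα).mp (by linarith)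
      · intro h
        have := (Real.le_rpow_inv_iff_of_pos hw₀0.le hu₀.1.le hα).mpr h
        linarith
    have hW₀val : 1 - W₀ ω = U₀ ω ^ α⁻¹ := by rw [hW₀]; simp [one_div]
    have hexp : (U₀ ω ^ α⁻¹) ^ (α / (α - δ)) = U₀ ω ^ (α - δ)⁻¹ := by
      rw [← Real.rpow_mul hu₀.1.le]
      congr 1
      field_simp
    have h2 : 1 - (1 - W₀ ω) ^ (α / (α - δ)) ≤ w₁ ↔ c ≤ U₀ ω := by
      rw [hW₀val, hexp]
      constructor
      · intro h
        exact (Real.le_rpow_inv_iff_of_pos hw₁0.le hu₀.1.le hαδ).mp (by linarith)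
      · intro h
        have := (Real.le_rpow_inv_iff_of_pos hw₁0.le hu₀.1.le hαδ).mpr h
        linarith
    have h3 : 1 - U₁ ω ^ (1 / δ) ≤ w₁ ↔ b ≤ U₁ ω := by
      simp only [one_div]
      constructor
      · intro h
        exact (Real.le_rpow_inv_iff_of_pos hw₁0.le hu₁.1.le hδ0).mp (by linarith)
      · intro h
        have := (Real.le_rpow_inv_iff_of_pos hw₁0.le hu₁.1.le hδ0).mpr h
        linarith
    have hEmem : ω ∈ E ↔ m ≤ U₀ ω ∨ ((a ≤ U₀ ω ∧ U₀ ω < m) ∧ b ≤ U₁ ω) := by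
      simp [hE_def, Set.mem_Ici, Set.mem_Ico, and_assoc]
    rw [hEmem, hW₁, h1]
    simp only [min_le_iff, h2, h3]
    constructor
    · rintro ⟨hh₁, hh₂ | hh₂⟩
      · exact Or.inl (max_le hh₁ hh₂)
      · rcases le_or_gt m (U₀ ω) with h | h
        · exact Or.inl h
        · exact Or.inr ⟨⟨hh₁, h⟩, hh₂⟩
    · rintro (h | ⟨⟨hh₁, hh₂⟩, hh₃⟩)
      · exact ⟨le_trans (le_max_left _ _) h, Or.inl (le_trans (le_max_right _ _) h)⟩
      · exact ⟨hh₁, Or.inr hh₃⟩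
  -- measure of E
  have hdisj : Disjoint (U₀ ⁻¹' (Set.Ici m))
      (U₀ ⁻¹' (Set.Ico a m) ∩ U₁ ⁻¹' (Set.Ici b)) := by
    rw [Set.disjoint_left]
    rintro ω h1 ⟨h2, _⟩
    exact absurd h1 (not_le.mpr h2.2)
  have e1 : Set.Ioo (0:ℝ) 1 ∩ Set.Ici m = Set.Ico m 1 := by
    ext x
    simp only [Set.mem_inter_iff, Set.mem_Ioo, Set.mem_Ici, Set.mem_Ico]
    constructor
    · rintro ⟨⟨_, h2⟩, h3⟩; exact ⟨h3, h2⟩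
    · rintro ⟨h1, h2⟩; exact ⟨⟨lt_of_lt_of_le hm0 h1, h2⟩, h1⟩
  have e2 : Set.Ioo (0:ℝ) 1 ∩ Set.Ico a m = Set.Ico a m := by
    apply Set.inter_eq_self_of_subset_right
    rintro x ⟨h1, h2⟩
    exact ⟨lt_of_lt_of_le ha0 h1, lt_trans h2 hm1⟩
  have e3 : Set.Ioo (0:ℝ) 1 ∩ Set.Ici b = Set.Ico b 1 := by
    ext x
    simp only [Set.mem_inter_iff, Set.mem_Ioo, Set.mem_Ici, Set.mem_Ico]
    constructor
    · rintro ⟨⟨_, h2⟩, h3⟩; exact ⟨h3, h2⟩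
    · rintro ⟨h1, h2⟩; exact ⟨⟨lt_of_lt_of_le hb0 h1, h2⟩, h1⟩
  have hPE : ℙ E = ENNReal.ofReal (1 - m)
      + ENNReal.ofReal (m - a) * ENNReal.ofReal (1 - b) := by
    rw [hE_def, measure_union hdisj
      ((hU₀m measurableSet_Ico).inter (hU₁m measurableSet_Ici)),
      hind.measure_inter_preimage_eq_mul _ _ measurableSet_Ico measurableSet_Ici,
      hpre₀ _ measurableSet_Ici, hpre₀ _ measurableSet_Ico, hpre₁ _ measurableSet_Ici,
      e1, e2, e3, Real.volume_Ico, Real.volume_Ico, Real.volume_Ico]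
  -- final computation
  have hbc : (1 - w₁) ^ α = b * c := by
    rw [hb_def, hc_def, ← Real.rpow_add hw₁0]
    ring_nf
  have hminac : min a c = a + c - m := by
    have := min_add_max a c
    linarith
  calc ℙ {ω | W₀ ω ≤ w₀ ∧ W₁ ω ≤ w₁}
      = ℙ ({ω | W₀ ω ≤ w₀ ∧ W₁ ω ≤ w₁} ∩ G) := hmeasG _
    _ = ℙ (E ∩ G) := by rw [hSG]
    _ = ℙ E := (hmeasG E).symm
    _ = ENNReal.ofReal (1 - m) + ENNReal.ofReal (m - a) * ENNReal.ofReal (1 - b) := hPE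
    _ = ENNReal.ofReal (1 - a - (1 - w₁) ^ α + b * min a c) := by
        rw [← ENNReal.ofReal_mul (by linarith), ← ENNReal.ofReal_add (by linarith)
          (mul_nonneg (by linarith) (by linarith))]
        congr 1
        rw [hbc, hminac]
        ring
    _ = ENNReal.ofReal (1 - a - (1 - w₁) ^ α + b * min a c) := rfl
end

section
/- For the A-M CPFD process with parameters α > 0 and δ ∈ (0, α): with W*_0 = 1 - U_0^(1/α) and W*_1 = min{1 - (1-W*_0)^(α/(α-δ)), 1 - U_1^(1/δ)} where U_0, U_1 are i.i.d. Uniform(0,1), we have P(W*_1 < W*_0) = δ/(α+δ). -/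
open MeasureTheory ProbabilityTheory Real Set

lemma pointwise13 {α δ u v : ℝ} (hα : 0 < α) (hδ0 : 0 < δ) (hδα : δ < α)
    (hu : u ∈ Ioo (0:ℝ) 1) (hv : v ∈ Ioo (0:ℝ) 1) :
    min (1 - (1 - (1 - u ^ (1/α))) ^ (α/(α-δ))) (1 - v ^ (1/δ)) < 1 - u ^ (1/α)
      ↔ u ^ (δ/α) < v := by
  obtain ⟨hu0, hu1⟩ := hu
  obtain ⟨hv0, hv1⟩ := hv
  have hαδ : 0 < α - δ := by linarith
  rw [show (1:ℝ) - (1 - u ^ (1/α)) = u ^ (1/α) by ring]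
  have e2 : (u ^ (1/α)) ^ (α/(α-δ)) = u ^ (1/(α-δ)) := by
    rw [← Real.rpow_mul hu0.le]; congr 1; field_simp
  have hlt : u ^ (1/(α-δ)) < u ^ (1/α) :=
    Real.rpow_lt_rpow_of_exponent_gt hu0 hu1
      (by apply one_div_lt_one_div_of_lt hαδ; linarith)
  rw [e2, min_lt_iff]
  constructor
  · rintro (h | h)
    · exfalso; linarith
    · have h' : u ^ (1/α) < v ^ (1/δ) := by linarith
      have := Real.rpow_lt_rpow (Real.rpow_nonneg hu0.le _) h' hδ0
      rwa [← Real.rpow_mul hu0.le, ← Real.rpow_mul hv0.le,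
        one_div_mul_cancel hδ0.ne', Real.rpow_one,
        show 1/α * δ = δ/α by ring] at this
  · intro h
    right
    have := Real.rpow_lt_rpow (Real.rpow_nonneg hu0.le _) h (one_div_pos.2 hδ0)
    rw [← Real.rpow_mul hu0.le, show δ/α * (1/δ) = 1/α by field_simp] at this
    linarith

lemma measure13 {Ω : Type*} [MeasureSpace Ω] [IsProbabilityMeasure (ℙ : Measure Ω)]
    (U₀ U₁ : Ω → ℝ) (hU₀m : Measurable U₀) (hU₁m : Measurable U₁)
    (hmap0 : Measure.map U₀ ℙ = volume.restrict (Ioo (0:ℝ) 1))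
    (hmap1 : Measure.map U₁ ℙ = volume.restrict (Ioo (0:ℝ) 1))
    (hind : IndepFun U₀ U₁ ℙ)
    (c : ℝ) (hc0 : 0 < c) (hc1 : c < 1) :
    ℙ {ω | U₀ ω ^ c < U₁ ω} = ENNReal.ofReal (c / (c + 1)) := by
  have hIoo : MeasurableSet (Ioo (0:ℝ) 1) := measurableSet_Ioo
  set S : Set (ℝ × ℝ) := {p | p.1 ^ c < p.2} with hS
  have hSm : MeasurableSet S :=
    measurableSet_lt (measurable_fst.pow_const c) measurable_snd
  have hprod : Measure.map (fun ω => (U₀ ω, U₁ ω)) ℙ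
      = (Measure.map U₀ ℙ).prod (Measure.map U₁ ℙ) :=
    (indepFun_iff_map_prod_eq_prod_map_map hU₀m.aemeasurable hU₁m.aemeasurable).1 hind
  have hpre : {ω | U₀ ω ^ c < U₁ ω} = (fun ω => (U₀ ω, U₁ ω)) ⁻¹' S := rfl
  rw [hpre, ← Measure.map_apply (hU₀m.prodMk hU₁m) hSm, hprod, hmap0, hmap1,
    Measure.prod_apply hSm]
  have hsec : ∀ x : ℝ, Prod.mk x ⁻¹' S = Ioi (x ^ c) := fun x => rfl
  calc ∫⁻ x, volume.restrict (Ioo (0:ℝ) 1) (Prod.mk x ⁻¹' S)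
        ∂(volume.restrict (Ioo (0:ℝ) 1))
      = ∫⁻ x in Ioo (0:ℝ) 1, ENNReal.ofReal (1 - x ^ c) := by
        refine setLIntegral_congr_fun hIoo (fun x hx => ?_)
        rw [hsec, Measure.restrict_apply measurableSet_Ioi]
        have hx0 : 0 < x ^ c := Real.rpow_pos_of_pos hx.1 _
        have hx1 : x ^ c < 1 := Real.rpow_lt_one hx.1.le hx.2 hc0
        rw [show Ioi (x ^ c) ∩ Ioo (0:ℝ) 1 = Ioo (x ^ c) 1 by
          ext y; simp only [mem_inter_iff, mem_Ioi, mem_Ioo]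
          constructor
          · rintro ⟨h1, _, h3⟩; exact ⟨h1, h3⟩
          · rintro ⟨h1, h2⟩; exact ⟨h1, lt_trans hx0 h1, h2⟩]
        rw [Real.volume_Ioo]
    _ = ENNReal.ofReal (∫ x in Ioo (0:ℝ) 1, (1 - x ^ c)) := by
        rw [← ofReal_integral_eq_lintegral_ofReal]
        · have h1 : IntervalIntegrable (fun x : ℝ => x ^ c) volume 0 1 :=
            intervalIntegral.intervalIntegrable_rpow (Or.inl hc0.le)
          have : IntegrableOn (fun x : ℝ => 1 - x ^ c) (Ioc (0:ℝ) 1) volume := by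
            apply Integrable.sub (integrableOn_const (s := Ioc (0:ℝ) 1) (μ := volume) (C := (1:ℝ)) (by simp))
            have := (intervalIntegrable_iff_integrableOn_Ioc_of_le (by norm_num : (0:ℝ) ≤ 1)).1 h1
            exact this
          exact this.mono_set Ioo_subset_Ioc_self
        · filter_upwards [ae_restrict_mem hIoo] with x hx
          simp only [Pi.zero_apply]
          have : x ^ c < 1 := Real.rpow_lt_one hx.1.le hx.2 hc0
          linarith
    _ = ENNReal.ofReal (c / (c + 1)) := by
        congr 1
        rw [← integral_Ioc_eq_integral_Ioo,
          ← intervalIntegral.integral_of_le (by norm_num : (0:ℝ) ≤ 1)]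
        rw [intervalIntegral.integral_sub intervalIntegrable_const
          (intervalIntegral.intervalIntegrable_rpow (Or.inl hc0.le))]
        rw [integral_rpow (Or.inl (by linarith))]
        simp only [intervalIntegral.integral_const, smul_eq_mul, mul_one, sub_zero]
        rw [Real.one_rpow, Real.zero_rpow (by linarith : c + 1 ≠ 0)]
        field_simp
        ring

theorem stmt_13 {Ω : Type*} [MeasureSpace Ω] [IsProbabilityMeasure (ℙ : Measure Ω)]
    (U₀ U₁ : Ω → ℝ) (hU₀m : Measurable U₀) (hU₁m : Measurable U₁)
    (hU₀ : pdf.IsUniform U₀ (Set.Ioo (0:ℝ) 1) ℙ)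
    (hU₁ : pdf.IsUniform U₁ (Set.Ioo (0:ℝ) 1) ℙ)
    (hind : IndepFun U₀ U₁ ℙ)
    (α δ : ℝ) (hα : 0 < α) (hδ : δ ∈ Set.Ioo 0 α)
    (W₀ W₁ : Ω → ℝ)
    (hW₀ : W₀ = fun ω => 1 - U₀ ω ^ (1 / α))
    (hW₁ : W₁ = fun ω =>
      min (1 - (1 - W₀ ω) ^ (α / (α - δ))) (1 - U₁ ω ^ (1 / δ))) :
    ℙ {ω | W₁ ω < W₀ ω} = ENNReal.ofReal (δ / (α + δ)) := by
  obtain ⟨hδ0, hδα⟩ := hδ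
  have hc0 : 0 < δ / α := div_pos hδ0 hα
  have hc1 : δ / α < 1 := (div_lt_one hα).2 hδα
  have hIoo : MeasurableSet (Ioo (0:ℝ) 1) := measurableSet_Ioo
  have hvol : volume (Ioo (0:ℝ) 1) = 1 := by simp
  have hmap0 : Measure.map U₀ ℙ = volume.restrict (Ioo (0:ℝ) 1) := by
    rw [hU₀]; unfold ProbabilityTheory.cond; rw [hvol]; simp
  have hmap1 : Measure.map U₁ ℙ = volume.restrict (Ioo (0:ℝ) 1) := by
    rw [hU₁]; unfold ProbabilityTheory.cond; rw [hvol]; simp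
  have hae0 : ∀ᵐ ω ∂ℙ, U₀ ω ∈ Ioo (0:ℝ) 1 := by
    have : ℙ (U₀ ⁻¹' (Ioo (0:ℝ) 1)ᶜ) = 0 := by
      rw [← Measure.map_apply hU₀m hIoo.compl, hmap0,
        Measure.restrict_apply hIoo.compl]
      simp
    exact (ae_iff).2 this
  have hae1 : ∀ᵐ ω ∂ℙ, U₁ ω ∈ Ioo (0:ℝ) 1 := by
    have : ℙ (U₁ ⁻¹' (Ioo (0:ℝ) 1)ᶜ) = 0 := by
      rw [← Measure.map_apply hU₁m hIoo.compl, hmap1,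
        Measure.restrict_apply hIoo.compl]
      simp
    exact (ae_iff).2 this
  have key : {ω | W₁ ω < W₀ ω} =ᵐ[ℙ] {ω | U₀ ω ^ (δ/α) < U₁ ω} := by
    rw [Filter.eventuallyEq_set]
    filter_upwards [hae0, hae1] with ω h0 h1
    simp only [Set.mem_setOf_eq, hW₀, hW₁]
    exact pointwise13 hα hδ0 hδα h0 h1
  rw [measure_congr key, measure13 U₀ U₁ hU₀m hU₁m hmap0 hmap1 hind _ hc0 hc1]
  congr 1
  have h1 : α ≠ 0 := hα.ne'
  have h2 : α + δ ≠ 0 := by positivity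
  have h3 : δ / α + 1 ≠ 0 := by positivity
  field_simp
  ring
end

section
/- Let σ > 0, α > δ > 0, U_0, U_1 i.i.d. Uniform(0,1), T*_0 = σ U_0^(-1/α), and T*_1 = σ min{(T*_0/σ)^(α/(α-δ)), U_1^(-1/δ)}. Then P(T*_1 < T*_0) = δ/(α+δ). -/
open MeasureTheory ProbabilityTheory Real Set

lemma stmt_19_pt_equiv (σ α δ u₀ u₁ : ℝ) (hσ : 0 < σ) (hα : 0 < α) (hδ0 : 0 < δ)
    (hδα : δ < α) (h0 : u₀ ∈ Set.Ioo (0:ℝ) 1) (h1 : u₁ ∈ Set.Ioo (0:ℝ) 1) :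
    σ * min ((σ * u₀ ^ (-(1/α)) / σ) ^ (α / (α - δ))) (u₁ ^ (-(1/δ))) < σ * u₀ ^ (-(1/α)) ↔
      u₀ ^ (δ/α) < u₁ := by
  obtain ⟨h0l, h0r⟩ := h0
  obtain ⟨h1l, h1r⟩ := h1
  rw [mul_div_cancel_left₀ _ hσ.ne', mul_lt_mul_iff_right₀ hσ, ← Real.rpow_mul h0l.le]
  have hαδ : 0 < α - δ := by linarith
  have he : -(1/α) * (α / (α - δ)) = -(1/(α-δ)) := by field_simp
  rw [he, min_lt_iff]
  have hge : ¬ (u₀ ^ (-(1/(α-δ))) < u₀ ^ (-(1/α))) := by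
    apply not_lt_of_ge
    apply Real.rpow_le_rpow_of_exponent_ge h0l h0r.le
    rw [neg_le_neg_iff]
    exact one_div_le_one_div_of_le hαδ (by linarith)
  rw [or_iff_right hge]
  have key : u₀ ^ (-(1/α)) = (u₀ ^ (δ/α)) ^ (-(1/δ)) := by
    rw [← Real.rpow_mul h0l.le]
    congr 1
    field_simp
  rw [key, Real.rpow_lt_rpow_iff_of_neg h1l (Real.rpow_pos_of_pos h0l _)
    (by simp [hδ0] : -(1/δ) < 0)]

lemma stmt_19_main {Ω : Type*} [MeasureSpace Ω] [IsProbabilityMeasure (ℙ : Measure Ω)]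
    (U₀ U₁ : Ω → ℝ) (hU₀m : Measurable U₀) (hU₁m : Measurable U₁)
    (hU₀ : pdf.IsUniform U₀ (Set.Ioo (0:ℝ) 1) ℙ)
    (hU₁ : pdf.IsUniform U₁ (Set.Ioo (0:ℝ) 1) ℙ)
    (hind : IndepFun U₀ U₁ ℙ) (c : ℝ) (hc : 0 < c) :
    ℙ {ω | U₀ ω ^ c < U₁ ω} = ENNReal.ofReal (1/(c+1)*c) := by
  have hmap₀ : Measure.map U₀ ℙ = volume.restrict (Set.Ioo (0:ℝ) 1) := by
    rw [pdf.IsUniform] at hU₀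
    rw [hU₀, ProbabilityTheory.cond, Real.volume_Ioo]
    norm_num
  have hmap₁ : Measure.map U₁ ℙ = volume.restrict (Set.Ioo (0:ℝ) 1) := by
    rw [pdf.IsUniform] at hU₁
    rw [hU₁, ProbabilityTheory.cond, Real.volume_Ioo]
    norm_num
  have hS : MeasurableSet {p : ℝ × ℝ | p.1 ^ c < p.2} :=
    measurableSet_lt (by fun_prop) measurable_snd
  have hpair : ℙ {ω | U₀ ω ^ c < U₁ ω}
      = (Measure.map (fun ω => (U₀ ω, U₁ ω)) ℙ) {p : ℝ × ℝ | p.1 ^ c < p.2} := by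
    rw [Measure.map_apply (hU₀m.prodMk hU₁m) hS]
    rfl
  rw [hpair, (indepFun_iff_map_prod_eq_prod_map_map hU₀m.aemeasurable hU₁m.aemeasurable).mp hind,
    hmap₀, hmap₁, Measure.prod_apply hS]
  have hinner : ∀ x ∈ Set.Ioo (0:ℝ) 1,
      (volume.restrict (Set.Ioo (0:ℝ) 1)) (Prod.mk x ⁻¹' {p : ℝ × ℝ | p.1 ^ c < p.2})
        = ENNReal.ofReal (1 - x ^ c) := by
    intro x hx
    have h1 : Prod.mk x ⁻¹' {p : ℝ × ℝ | p.1 ^ c < p.2} = Set.Ioi (x ^ c) := rfl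
    rw [h1, Measure.restrict_apply measurableSet_Ioi]
    have h2 : Set.Ioi (x ^ c) ∩ Set.Ioo (0:ℝ) 1 = Set.Ioo (x ^ c) 1 := by
      ext y
      simp only [Set.mem_inter_iff, Set.mem_Ioi, Set.mem_Ioo]
      constructor
      · rintro ⟨h, _, h'⟩; exact ⟨h, h'⟩
      · rintro ⟨h, h'⟩
        exact ⟨h, lt_trans (Real.rpow_pos_of_pos hx.1 c) h, h'⟩
    rw [h2, Real.volume_Ioo]
  rw [setLIntegral_congr_fun measurableSet_Ioo hinner]
  have h1 : IntervalIntegrable (fun x : ℝ => x ^ c) volume 0 1 :=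
    intervalIntegral.intervalIntegrable_rpow (by left; linarith)
  have hint : IntervalIntegrable (fun x : ℝ => 1 - x ^ c) volume 0 1 :=
    intervalIntegrable_const.sub h1
  rw [← ofReal_integral_eq_lintegral_ofReal]
  · congr 1
    rw [← MeasureTheory.integral_Ioc_eq_integral_Ioo,
        ← intervalIntegral.integral_of_le (by norm_num : (0:ℝ) ≤ 1)]
    rw [intervalIntegral.integral_sub intervalIntegrable_const h1,
        integral_rpow (Or.inl (by linarith)), intervalIntegral.integral_const]
    rw [Real.one_rpow, Real.zero_rpow (by positivity)]
    field_simp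
    simp
  · have := (intervalIntegrable_iff_integrableOn_Ioc_of_le (by norm_num : (0:ℝ) ≤ 1)).mp hint
    exact this.mono_set Set.Ioo_subset_Ioc_self
  · filter_upwards [ae_restrict_mem measurableSet_Ioo] with x hx
    have : x ^ c ≤ 1 := Real.rpow_le_one hx.1.le hx.2.le hc.le
    simp only [Pi.zero_apply]; linarith

lemma stmt_19_ae_mem {Ω : Type*} [MeasureSpace Ω] [IsProbabilityMeasure (ℙ : Measure Ω)]
    (U : Ω → ℝ) (hUm : Measurable U)
    (hU : pdf.IsUniform U (Set.Ioo (0:ℝ) 1) ℙ) :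
    ∀ᵐ ω ∂(ℙ : Measure Ω), U ω ∈ Set.Ioo (0:ℝ) 1 := by
  have hmap : Measure.map U ℙ = volume.restrict (Set.Ioo (0:ℝ) 1) := by
    rw [pdf.IsUniform] at hU
    rw [hU, ProbabilityTheory.cond, Real.volume_Ioo]
    norm_num
  rw [ae_iff]
  have : {ω | ¬ U ω ∈ Set.Ioo (0:ℝ) 1} = U ⁻¹' (Set.Ioo (0:ℝ) 1)ᶜ := rfl
  rw [this, ← Measure.map_apply hUm measurableSet_Ioo.compl, hmap,
    Measure.restrict_apply measurableSet_Ioo.compl]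
  simp

theorem stmt_19 {Ω : Type*} [MeasureSpace Ω] [IsProbabilityMeasure (ℙ : Measure Ω)]
    (U₀ U₁ : Ω → ℝ) (hU₀m : Measurable U₀) (hU₁m : Measurable U₁)
    (hU₀ : pdf.IsUniform U₀ (Set.Ioo (0:ℝ) 1) ℙ)
    (hU₁ : pdf.IsUniform U₁ (Set.Ioo (0:ℝ) 1) ℙ)
    (hind : IndepFun U₀ U₁ ℙ)
    (σ α δ : ℝ) (hσ : 0 < σ) (hα : 0 < α) (hδ : δ ∈ Set.Ioo 0 α)
    (T₀ T₁ : Ω → ℝ)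
    (hT₀ : T₀ = fun ω => σ * U₀ ω ^ (-(1 / α)))
    (hT₁ : T₁ = fun ω =>
      σ * min ((T₀ ω / σ) ^ (α / (α - δ))) (U₁ ω ^ (-(1 / δ)))) :
    ℙ {ω | T₁ ω < T₀ ω} = ENNReal.ofReal (δ / (α + δ)) := by
  obtain ⟨hδ0, hδα⟩ := hδ
  have hcongr : ℙ {ω | T₁ ω < T₀ ω} = ℙ {ω | U₀ ω ^ (δ/α) < U₁ ω} := by
    apply measure_congr
    rw [Filter.eventuallyEq_set]
    filter_upwards [stmt_19_ae_mem U₀ hU₀m hU₀, stmt_19_ae_mem U₁ hU₁m hU₁] with ω h0 h1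
    simp only [Set.mem_setOf_eq, hT₀, hT₁]
    exact stmt_19_pt_equiv σ α δ (U₀ ω) (U₁ ω) hσ hα hδ0 hδα h0 h1
  rw [hcongr, stmt_19_main U₀ U₁ hU₀m hU₁m hU₀ hU₁ hind (δ/α) (by positivity)]
  congr 1
  have hαδ : α + δ ≠ 0 := by positivity
  field_simp
  ring
end
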